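/- Let n ≥ 1, 0 < p ≤ 1, 1 < r < ∞, and k₀ ∈ ℤ. For each integer k ≤ k₀ let (a_{j,k})_j be H^p atoms with defining cubes (I_{j,k})_j satisfying Σ_j χ_{I_{j,k}}(x) ≤ C₀ for all x, and set λ_{j,k} = 2^k |I_{j,k}|^{1/p}. Assume S = sup_{k ≤ k₀} 2^{kp} Σ_j |I_{j,k}| < ∞. Then the series f₁(x) = Σ_{k ≤ k₀} Σ_j λ_{j,k} a_{j,k}(x) converges absolutely a.e., f₁ ∈ L^∞ with ‖f₁‖_∞ ≤ c·2^{k₀}, and ‖f₁‖_{L^r}^r ≤ c · 2^{k₀(r−p)} · S, where c depends only on n, p, r, C₀. -/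

import Mathlib

open MeasureTheory ENNReal Set

noncomputable section

abbrev Euc (n : ℕ) := EuclideanSpace ℝ (Fin n)

/-- Distribution function `m(F, lam) = |{x : lam < F x}|` (Lebesgue measure). -/
def distFn {n : ℕ} (F : Euc n → ℝ≥0∞) (lam : ℝ≥0∞) : ℝ≥0∞ :=
  volume {x | lam < F x}

/-- View a real-valued function as an `ℝ≥0∞`-valued one via its absolute value. -/
def eF {n : ℕ} (g : Euc n → ℝ) : Euc n → ℝ≥0∞ :=
  fun x => ENNReal.ofReal |g x|

/-- Dyadic Lorentz `L^{p,q}` quasinorm. -/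
def lorentzNorm {n : ℕ} (p : ℝ) (q : ℝ≥0∞) (F : Euc n → ℝ≥0∞) : ℝ≥0∞ :=
  if q = ∞ then ⨆ k : ℤ, (2 : ℝ≥0∞) ^ k * (distFn F ((2 : ℝ≥0∞) ^ k)) ^ (1/p)
  else (∑' k : ℤ, ((2 : ℝ≥0∞) ^ k * (distFn F ((2 : ℝ≥0∞) ^ k)) ^ (1/p)) ^ q.toReal) ^ (1/q.toReal)

/-- `ℓ^q(ℤ)` norm of a nonnegative sequence. -/
def ellq (q : ℝ≥0∞) (a : ℤ → ℝ≥0∞) : ℝ≥0∞ :=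
  if q = ∞ then ⨆ k : ℤ, a k else (∑' k : ℤ, (a k) ^ q.toReal) ^ (1/q.toReal)

/-- The axis-parallel closed cube centered at `c` with half side-length `r`. -/
def cube {n : ℕ} (c : Euc n) (r : ℝ) : Set (Euc n) := {y | ∀ i, |y i - c i| ≤ r}

/-- `H^p` atom with defining cube `cube c r`; `|cube c r| = (2r)^n`. -/
def IsHpAtom {n : ℕ} (p : ℝ) (a : Euc n → ℝ) (c : Euc n) (r : ℝ) : Prop :=
  0 < r ∧ Measurable a ∧ (∀ x, x ∉ cube c r → a x = 0) ∧
    (∀ᵐ x ∂(volume : Measure (Euc n)), |a x| ≤ ((((2*r)^n : ℝ)) ^ (1/p))⁻¹) ∧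
    ∀ α : Fin n → ℕ, (∑ i, α i) ≤ ⌊(n : ℝ) * (1/p - 1)⌋₊ →
      (∫ y : Euc n, (∏ i, y i ^ α i) * a y) = 0

/-- `(f * ψ_t)(y)` where `ψ_t(x) = t⁻ⁿ ψ(x/t)`. -/
def convAt {n : ℕ} (ψ f : Euc n → ℝ) (t : ℝ) (y : Euc n) : ℝ :=
  ∫ z : Euc n, f z * ((t ^ n)⁻¹ * ψ (t⁻¹ • (y - z)))

/-- Non-tangential maximal function. -/
def ntMax {n : ℕ} (ψ f : Euc n → ℝ) (x : Euc n) : ℝ≥0∞ :=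
  ⨆ (y : Euc n) (t : ℝ) (_ : 0 < t) (_ : dist x y < t), ENNReal.ofReal |convAt ψ f t y|

/-- Radial maximal function. -/
def radMax {n : ℕ} (φ f : Euc n → ℝ) (x : Euc n) : ℝ≥0∞ :=
  ⨆ (t : ℝ) (_ : 0 < t), ENNReal.ofReal |convAt φ f t x|

section Aux

lemma my_iSup_rpow {ι : Type*} [Nonempty ι] (f : ι → ℝ≥0∞) {r : ℝ} (hr : 0 < r) :
    (⨆ i, f i) ^ r = ⨆ i, f i ^ r := by
  apply le_antisymm
  · have h1 : ∀ i, f i ≤ (⨆ i, f i ^ r) ^ (1/r) := by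
      intro i
      have : f i ^ r ≤ ⨆ i, f i ^ r := le_iSup (fun i => f i ^ r) i
      have h2 := ENNReal.rpow_le_rpow this (by positivity : (0:ℝ) ≤ 1/r)
      rwa [← ENNReal.rpow_mul, mul_one_div, div_self hr.ne', ENNReal.rpow_one] at h2
    have h3 : (⨆ i, f i) ≤ (⨆ i, f i ^ r) ^ (1/r) := iSup_le h1
    have h4 := ENNReal.rpow_le_rpow h3 hr.le
    rwa [← ENNReal.rpow_mul, one_div_mul_cancel hr.ne', ENNReal.rpow_one] at h4
  · exact iSup_le fun i => ENNReal.rpow_le_rpow (le_iSup f i) hr.le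

lemma my_rpow_le_of_le {x B : ℝ≥0∞} {r : ℝ} (hr : 1 ≤ r) (hx : x ≤ B) :
    x ^ r ≤ B ^ (r - 1) * x := by
  rcases eq_or_ne x 0 with h0 | h0
  · simp [h0, ENNReal.zero_rpow_of_pos (by linarith : (0:ℝ) < r)]
  rcases eq_or_ne x ∞ with ht | ht
  · subst ht
    have hB : B = ∞ := top_le_iff.mp hx
    subst hB
    rcases eq_or_lt_of_le hr with h1 | h1
    · simp [← h1]
    · rw [ENNReal.top_rpow_of_pos (by linarith), ENNReal.top_rpow_of_pos (by linarith)]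
      simp
  calc x ^ r = x ^ ((r - 1) + 1) := by ring_nf
    _ = x ^ (r - 1) * x ^ (1:ℝ) := ENNReal.rpow_add _ _ h0 ht
    _ = x ^ (r - 1) * x := by rw [ENNReal.rpow_one]
    _ ≤ B ^ (r - 1) * x := mul_le_mul_left (ENNReal.rpow_le_rpow hx (by linarith)) x

lemma my_minkowski {α : Type*} [MeasurableSpace α] (μ : Measure α) {r : ℝ} (hr : 1 ≤ r)
    (g : ℕ → α → ℝ≥0∞) (hg : ∀ i, Measurable (g i)) :
    (∫⁻ x, (∑' i, g i x) ^ r ∂μ) ^ (1/r) ≤ ∑' i, (∫⁻ x, g i x ^ r ∂μ) ^ (1/r) := by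
  have hr0 : 0 < r := by linarith
  have hfin : ∀ m, (∫⁻ x, (∑ i ∈ Finset.range m, g i x) ^ r ∂μ) ^ (1/r) ≤
      ∑ i ∈ Finset.range m, (∫⁻ x, g i x ^ r ∂μ) ^ (1/r) := by
    intro m
    induction m with
    | zero =>
      have h1 : (0:ℝ) < 1/r := by positivity
      simp [ENNReal.zero_rpow_of_pos, hr0, h1]
    | succ m ih =>
      have hadd := ENNReal.lintegral_Lp_add_le (μ := μ)
        (f := fun x => ∑ i ∈ Finset.range m, g i x) (g := g m)
        (Finset.measurable_sum _ fun i _ => hg i).aemeasurable (hg m).aemeasurable hr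
      calc (∫⁻ x, (∑ i ∈ Finset.range (m+1), g i x) ^ r ∂μ) ^ (1/r)
          = (∫⁻ x, ((∑ i ∈ Finset.range m, g i x) + g m x) ^ r ∂μ) ^ (1/r) := by
            simp [Finset.sum_range_succ]
        _ ≤ (∫⁻ x, (∑ i ∈ Finset.range m, g i x) ^ r ∂μ) ^ (1/r)
              + (∫⁻ x, g m x ^ r ∂μ) ^ (1/r) := hadd
        _ ≤ ∑ i ∈ Finset.range (m+1), (∫⁻ x, g i x ^ r ∂μ) ^ (1/r) := by
            rw [Finset.sum_range_succ]; exact add_le_add_left ih _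
  have hmono : Monotone fun m x => (∑ i ∈ Finset.range m, g i x) ^ r := by
    intro m m' h x
    simp only
    exact ENNReal.rpow_le_rpow (Finset.sum_le_sum_of_subset (Finset.range_subset_range.2 h)) hr0.le
  have key : ∫⁻ x, (∑' i, g i x) ^ r ∂μ = ⨆ m, ∫⁻ x, (∑ i ∈ Finset.range m, g i x) ^ r ∂μ := by
    rw [← lintegral_iSup (fun m => (Finset.measurable_sum _ fun i _ => hg i).pow_const _) hmono]
    congr 1
    funext x
    rw [ENNReal.tsum_eq_iSup_nat, my_iSup_rpow _ hr0]
  rw [key, my_iSup_rpow _ (show (0:ℝ) < 1/r by positivity)]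
  exact iSup_le fun m => (hfin m).trans
    (Summable.sum_le_tsum _ (fun i _ => zero_le) ENNReal.summable)

lemma my_ofReal_max (a : ℝ) : ENNReal.ofReal a = ENNReal.ofReal (max a 0) := by
  rcases le_total a 0 with h | h
  · rw [max_eq_right h, ENNReal.ofReal_eq_zero.2 h, ENNReal.ofReal_zero]
  · rw [max_eq_left h]

lemma my_tsum_real_eq {ι : Type*} [Countable ι] (u : ι → ℝ) :
    (∑' i, u i) = if (∑' i, ENNReal.ofReal (u i)) ≠ ∞ ∧ (∑' i, ENNReal.ofReal (-u i)) ≠ ∞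
      then (∑' i, ENNReal.ofReal (u i)).toReal - (∑' i, ENNReal.ofReal (-u i)).toReal
      else 0 := by
  by_cases h : Summable u
  · have habs : Summable fun i => |u i| := summable_abs_iff.2 h
    have hpos : Summable fun i => max (u i) 0 :=
      habs.of_nonneg_of_le (fun i => le_max_right _ _) (fun i => max_le (le_abs_self _) (abs_nonneg _))
    have hneg : Summable fun i => max (-u i) 0 :=
      habs.of_nonneg_of_le (fun i => le_max_right _ _)
        (fun i => max_le (by rw [← abs_neg]; exact le_abs_self _) (abs_nonneg _))
    have hP : (∑' i, ENNReal.ofReal (u i)) = ENNReal.ofReal (∑' i, max (u i) 0) := by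
      rw [ENNReal.ofReal_tsum_of_nonneg (fun i => le_max_right _ _) hpos]
      exact tsum_congr fun i => (my_ofReal_max (u i)).symm ▸ rfl
    have hN : (∑' i, ENNReal.ofReal (-u i)) = ENNReal.ofReal (∑' i, max (-u i) 0) := by
      rw [ENNReal.ofReal_tsum_of_nonneg (fun i => le_max_right _ _) hneg]
      exact tsum_congr fun i => (my_ofReal_max (-u i)).symm ▸ rfl
    rw [hP, hN, if_pos ⟨ENNReal.ofReal_ne_top, ENNReal.ofReal_ne_top⟩,
      ENNReal.toReal_ofReal (tsum_nonneg fun i => le_max_right _ _),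
      ENNReal.toReal_ofReal (tsum_nonneg fun i => le_max_right _ _), ← Summable.tsum_sub hpos hneg]
    refine tsum_congr fun i => ?_
    rcases le_total (u i) 0 with h' | h'
    · rw [max_eq_right h', max_eq_left (neg_nonneg.2 h')]; ring
    · rw [max_eq_left h', max_eq_right (neg_nonpos.2 h')]; ring
  · rw [tsum_eq_zero_of_not_summable h, if_neg]
    rintro ⟨hP, hN⟩
    apply h
    have h1 := ENNReal.summable_toReal hP
    have h2 := ENNReal.summable_toReal hN
    have h1' : Summable fun i => max (u i) 0 := by
      refine h1.congr fun i => ?_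
      rw [my_ofReal_max, ENNReal.toReal_ofReal (le_max_right _ _)]
    have h2' : Summable fun i => max (-u i) 0 := by
      refine h2.congr fun i => ?_
      rw [my_ofReal_max, ENNReal.toReal_ofReal (le_max_right _ _)]
    refine (h1'.sub h2').congr fun i => ?_
    rcases le_total (u i) 0 with h' | h'
    · rw [max_eq_right h', max_eq_left (neg_nonneg.2 h')]; ring
    · rw [max_eq_left h', max_eq_right (neg_nonpos.2 h')]; ring

lemma my_measurable_tsum {α ι : Type*} [MeasurableSpace α] [Countable ι] {u : ι → α → ℝ}
    (hu : ∀ i, Measurable (u i)) : Measurable fun x => ∑' i, u i x := by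
  have : (fun x => ∑' i, u i x) = fun x =>
      if (∑' i, ENNReal.ofReal (u i x)) ≠ ∞ ∧ (∑' i, ENNReal.ofReal (-u i x)) ≠ ∞
      then (∑' i, ENNReal.ofReal (u i x)).toReal - (∑' i, ENNReal.ofReal (-u i x)).toReal
      else 0 := funext fun x => my_tsum_real_eq fun i => u i x
  rw [this]
  have hP : Measurable fun x => ∑' i, ENNReal.ofReal (u i x) :=
    Measurable.ennreal_tsum fun i => (hu i).ennreal_ofReal
  have hN : Measurable fun x => ∑' i, ENNReal.ofReal (-u i x) :=
    Measurable.ennreal_tsum fun i => (hu i).neg.ennreal_ofReal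
  have hs : MeasurableSet {x | (∑' i, ENNReal.ofReal (u i x)) ≠ ∞ ∧
      (∑' i, ENNReal.ofReal (-u i x)) ≠ ∞} :=
    ((hP (measurableSet_singleton ⊤)).compl).inter ((hN (measurableSet_singleton ⊤)).compl)
  exact Measurable.ite hs (hP.ennreal_toReal.sub hN.ennreal_toReal) measurable_const

lemma my_ofReal_abs_tsum_le {ι : Type*} [Countable ι] (u : ι → ℝ) :
    ENNReal.ofReal |∑' i, u i| ≤ ∑' i, ENNReal.ofReal |u i| := by
  by_cases htop : (∑' i, ENNReal.ofReal |u i|) = ∞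
  · rw [htop]; exact le_top
  have habs : Summable fun i => |u i| := by
    have := ENNReal.summable_toReal htop
    refine this.congr fun i => ENNReal.toReal_ofReal (abs_nonneg _)
  by_cases h : Summable u
  · have hb : |∑' i, u i| ≤ ∑' i, |u i| := by
      have := norm_tsum_le_tsum_norm (f := u) (by simpa only [Real.norm_eq_abs] using habs)
      simpa only [Real.norm_eq_abs] using this
    calc ENNReal.ofReal |∑' i, u i| ≤ ENNReal.ofReal (∑' i, |u i|) :=
        ENNReal.ofReal_le_ofReal hb
      _ = ∑' i, ENNReal.ofReal |u i| := ENNReal.ofReal_tsum_of_nonneg (fun i => abs_nonneg _) habs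
  · exact absurd (summable_abs_iff.1 habs) h

lemma my_cube_eq {n : ℕ} (c : Euc n) (r : ℝ) :
    cube c r = ((MeasurableEquiv.toLp 2 (Fin n → ℝ)).symm) ⁻¹'
      (Set.univ.pi fun i => Icc (c i - r) (c i + r)) := by
  ext y
  simp only [cube, mem_setOf_eq, mem_preimage, Set.mem_pi, mem_univ, forall_true_left, mem_Icc]
  refine forall_congr' fun i => ?_
  have hcoe : ((MeasurableEquiv.toLp 2 (Fin n → ℝ)).symm) y i = y i := rfl
  rw [hcoe, abs_le]
  constructor
  · rintro ⟨h1, h2⟩; exact ⟨by linarith, by linarith⟩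
  · rintro ⟨h1, h2⟩; exact ⟨by linarith, by linarith⟩

lemma my_cube_measurable {n : ℕ} (c : Euc n) (r : ℝ) : MeasurableSet (cube c r) := by
  rw [my_cube_eq]
  exact ((MeasurableEquiv.toLp 2 (Fin n → ℝ)).symm).measurable
    (MeasurableSet.univ_pi fun i => measurableSet_Icc)

lemma my_cube_volume {n : ℕ} (c : Euc n) {r : ℝ} (hr : 0 ≤ r) :
    volume (cube c r) = ENNReal.ofReal ((2*r)^n) := by
  rw [my_cube_eq,
    (EuclideanSpace.volume_preserving_symm_measurableEquiv_toLp (Fin n)).measure_preimage_equiv,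
    volume_pi_pi]
  have : ∀ i : Fin n, volume (Icc (c i - r) (c i + r)) = ENNReal.ofReal (2*r) := by
    intro i; rw [Real.volume_Icc]; congr 1; ring
  simp_rw [this]
  rw [Finset.prod_const, ← ENNReal.ofReal_pow (by linarith)]
  simp

def eqv (k₀ : ℤ) : ℕ ≃ {k : ℤ // k ≤ k₀} where
  toFun m := ⟨k₀ - m, by omega⟩
  invFun k := (k₀ - k.1).toNat
  left_inv m := by simp
  right_inv k := by
    apply Subtype.ext
    have := k.2
    simp only
    omega

lemma my_geom (k₀ : ℤ) {s : ℝ} (hs : 0 < s) :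
    ∑' (k : {k : ℤ // k ≤ k₀}), ENNReal.ofReal ((2:ℝ) ^ (((k:ℤ):ℝ) * s)) ≤
      ENNReal.ofReal ((2:ℝ) ^ ((k₀:ℝ) * s) * (1 - (2:ℝ) ^ (-s))⁻¹) := by
  have hq0 : (0:ℝ) ≤ (2:ℝ) ^ (-s) := Real.rpow_nonneg (by norm_num) _
  have hq1 : (2:ℝ) ^ (-s) < 1 := Real.rpow_lt_one_of_one_lt_of_neg (by norm_num) (by linarith)
  rw [← (eqv k₀).tsum_eq]
  have hterm : ∀ m : ℕ, ENNReal.ofReal ((2:ℝ) ^ ((((eqv k₀ m : {k : ℤ // k ≤ k₀}) : ℤ) : ℝ) * s))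
      = ENNReal.ofReal ((2:ℝ) ^ ((k₀:ℝ) * s)) * (ENNReal.ofReal ((2:ℝ) ^ (-s))) ^ m := by
    intro m
    have h1 : (((eqv k₀ m : {k : ℤ // k ≤ k₀}) : ℤ) : ℝ) = (k₀ : ℝ) - m := by
      simp [eqv]
    rw [h1]
    have h2 : (2:ℝ) ^ (((k₀ : ℝ) - m) * s) = (2:ℝ) ^ ((k₀:ℝ) * s) * ((2:ℝ) ^ (-s)) ^ m := by
      rw [← Real.rpow_natCast ((2:ℝ) ^ (-s)) m, ← Real.rpow_mul (by norm_num),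
        ← Real.rpow_add (by norm_num)]
      ring_nf
    rw [h2, ENNReal.ofReal_mul (Real.rpow_nonneg (by norm_num) _), ENNReal.ofReal_pow hq0]
  simp_rw [hterm]
  rw [ENNReal.tsum_mul_left, ENNReal.tsum_geometric]
  have h3 : (1 - ENNReal.ofReal ((2:ℝ) ^ (-s)))⁻¹ = ENNReal.ofReal ((1 - (2:ℝ) ^ (-s))⁻¹) := by
    rw [← ENNReal.ofReal_one, ← ENNReal.ofReal_sub _ hq0,
      ENNReal.ofReal_inv_of_pos (by linarith)]
  rw [h3, ← ENNReal.ofReal_mul (Real.rpow_nonneg (by norm_num) _)]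

end Aux

/-- The `L^∞` and `L^r` bounds for the "good part" `f₁ = Σ_{k ≤ k₀} Σ_j λ_{j,k} a_{j,k}`
of an atomic decomposition, where `λ_{j,k} = 2^k |I_{j,k}|^{1/p}`. -/
theorem stmt13 (n : ℕ) (hn : 1 ≤ n) (p : ℝ) (hp0 : 0 < p) (hp1 : p ≤ 1)
    (r : ℝ) (hr1 : 1 < r) (C₀ : ℝ) (hC₀ : 0 < C₀) :
    ∃ c : ℝ, 0 < c ∧
      ∀ (k₀ : ℤ) (J : ℤ → Set ℕ) (a : ℤ → ℕ → Euc n → ℝ)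
        (ctr : ℤ → ℕ → Euc n) (ρ : ℤ → ℕ → ℝ),
        (∀ k ≤ k₀, ∀ j ∈ J k, IsHpAtom p (a k j) (ctr k j) (ρ k j)) →
        (∀ k ≤ k₀, ∀ x : Euc n,
          (∑' j : J k, (cube (ctr k (j : ℕ)) (ρ k (j : ℕ))).indicator
            (fun _ => (1:ℝ≥0∞)) x) ≤ ENNReal.ofReal C₀) →
        (⨆ k : {k : ℤ // k ≤ k₀},
          ENNReal.ofReal ((2:ℝ) ^ ((((k : ℤ) : ℝ)) * p)) *
            ∑' j : J (k : ℤ), ENNReal.ofReal ((2 * ρ (k : ℤ) (j : ℕ)) ^ n)) < ∞ →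
        ∃ f₁ : Euc n → ℝ,
          (∀ᵐ x ∂(volume : Measure (Euc n)),
            (∑' (k : {k : ℤ // k ≤ k₀}) (j : J (k : ℤ)),
              ENNReal.ofReal
                |(2:ℝ) ^ (k : ℤ) * ((2 * ρ (k : ℤ) (j : ℕ)) ^ n) ^ (1/p) *
                  a (k : ℤ) (j : ℕ) x|) < ∞ ∧
            f₁ x = ∑' (k : {k : ℤ // k ≤ k₀}) (j : J (k : ℤ)),
              (2:ℝ) ^ (k : ℤ) * ((2 * ρ (k : ℤ) (j : ℕ)) ^ n) ^ (1/p) *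
                a (k : ℤ) (j : ℕ) x) ∧
          MemLp f₁ ∞ volume ∧
          eLpNorm f₁ ∞ volume ≤ ENNReal.ofReal (c * (2:ℝ) ^ k₀) ∧
          eLpNorm f₁ (ENNReal.ofReal r) volume ^ r ≤
            ENNReal.ofReal (c * (2:ℝ) ^ ((k₀ : ℝ) * (r - p))) *
              ⨆ k : {k : ℤ // k ≤ k₀},
                ENNReal.ofReal ((2:ℝ) ^ ((((k : ℤ) : ℝ)) * p)) *
                  ∑' j : J (k : ℤ), ENNReal.ofReal ((2 * ρ (k : ℤ) (j : ℕ)) ^ n) := by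
  -- constants
  have hr0 : (0:ℝ) < r := by linarith
  have hrp : (0:ℝ) < r - p := by linarith
  set s : ℝ := (r - p) / r with hs_def
  have hs : 0 < s := by positivity
  have hq1 : (2:ℝ) ^ (-s) < 1 := Real.rpow_lt_one_of_one_lt_of_neg (by norm_num) (by linarith)
  have hq0 : (0:ℝ) ≤ (2:ℝ) ^ (-s) := Real.rpow_nonneg (by norm_num) _
  set D : ℝ := C₀ ^ ((r-1)/r) * (1 - (2:ℝ) ^ (-s))⁻¹ with hD_def
  have hD : 0 < D := mul_pos (Real.rpow_pos_of_pos hC₀ _) (inv_pos.2 (by linarith))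
  refine ⟨max (2*C₀) (D ^ r), lt_max_of_lt_left (by linarith), ?_⟩
  intro k₀ J a ctr ρ hAtom hOv hS
  have hAtom' : ∀ (k : {k : ℤ // k ≤ k₀}) (j : J (k:ℤ)),
      IsHpAtom p (a (k:ℤ) (j:ℕ)) (ctr (k:ℤ) (j:ℕ)) (ρ (k:ℤ) (j:ℕ)) :=
    fun k j => hAtom k k.2 j j.2
  -- the terms
  set t : ∀ (k : {k : ℤ // k ≤ k₀}), J (k:ℤ) → Euc n → ℝ := fun k j x =>
    (2:ℝ) ^ (k:ℤ) * ((2 * ρ (k:ℤ) (j:ℕ)) ^ n) ^ (1/p) * a (k:ℤ) (j:ℕ) x with ht_def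
  set G : {k : ℤ // k ≤ k₀} → Euc n → ℝ≥0∞ := fun k x =>
    ∑' j : J (k:ℤ), ENNReal.ofReal |t k j x| with hG_def
  set F : Euc n → ℝ≥0∞ := fun x => ∑' k : {k : ℤ // k ≤ k₀}, G k x with hF_def
  set Ssup : ℝ≥0∞ := ⨆ k : {k : ℤ // k ≤ k₀},
    ENNReal.ofReal ((2:ℝ) ^ ((((k : ℤ) : ℝ)) * p)) *
      ∑' j : J (k : ℤ), ENNReal.ofReal ((2 * ρ (k : ℤ) (j : ℕ)) ^ n) with hSsup_def
  have ht_meas : ∀ k j, Measurable (t k j) := fun k j => ((hAtom' k j).2.1).const_mul _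
  have hoft_meas : ∀ k j, Measurable fun x => ENNReal.ofReal |t k j x| :=
    fun k j => (continuous_abs.measurable.comp (ht_meas k j)).ennreal_ofReal
  have hG_meas : ∀ k, Measurable (G k) := fun k => Measurable.ennreal_tsum fun j => hoft_meas k j
  -- pointwise bound per atom
  have hper : ∀ (k : {k : ℤ // k ≤ k₀}) (j : J (k:ℤ)),
      ∀ᵐ x ∂(volume : Measure (Euc n)), ENNReal.ofReal |t k j x| ≤
        ENNReal.ofReal ((2:ℝ) ^ (k:ℤ)) *
          (cube (ctr (k:ℤ) (j:ℕ)) (ρ (k:ℤ) (j:ℕ))).indicator (fun _ => (1:ℝ≥0∞)) x := by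
    intro k j
    obtain ⟨hρ, hameas, hsupp, hbdd, hmom⟩ := hAtom' k j
    filter_upwards [hbdd] with x hx
    by_cases hxc : x ∈ cube (ctr (k:ℤ) (j:ℕ)) (ρ (k:ℤ) (j:ℕ))
    · rw [Set.indicator_of_mem hxc, mul_one]
      apply ENNReal.ofReal_le_ofReal
      have hM : (0:ℝ) < ((2 * ρ (k:ℤ) (j:ℕ)) ^ n) ^ (1/p) :=
        Real.rpow_pos_of_pos (by positivity) _
      have h2k : (0:ℝ) < (2:ℝ) ^ (k:ℤ) := zpow_pos (by norm_num) _
      calc |t k j x| = (2:ℝ) ^ (k:ℤ) * ((2 * ρ (k:ℤ) (j:ℕ)) ^ n) ^ (1/p) * |a (k:ℤ) (j:ℕ) x| := by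
            rw [ht_def]; rw [abs_mul, abs_of_nonneg (by positivity)]
        _ ≤ (2:ℝ) ^ (k:ℤ) * ((2 * ρ (k:ℤ) (j:ℕ)) ^ n) ^ (1/p) *
              ((((2 * ρ (k:ℤ) (j:ℕ)) ^ n) ^ (1/p))⁻¹) := by
            exact mul_le_mul_of_nonneg_left hx (by positivity)
        _ = (2:ℝ) ^ (k:ℤ) := by field_simp
    · have hz : t k j x = 0 := by rw [ht_def]; simp [hsupp x hxc]
      rw [hz, Set.indicator_of_notMem hxc]
      simp
  -- a.e. bound on G k
  have hGk_le : ∀ k : {k : ℤ // k ≤ k₀}, ∀ᵐ x ∂(volume : Measure (Euc n)),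
      G k x ≤ ENNReal.ofReal ((2:ℝ) ^ (k:ℤ)) * ENNReal.ofReal C₀ := by
    intro k
    filter_upwards [ae_all_iff.2 (hper k)] with x hx
    calc G k x ≤ ∑' j : J (k:ℤ), ENNReal.ofReal ((2:ℝ) ^ (k:ℤ)) *
          (cube (ctr (k:ℤ) (j:ℕ)) (ρ (k:ℤ) (j:ℕ))).indicator (fun _ => (1:ℝ≥0∞)) x :=
        ENNReal.tsum_le_tsum hx
      _ = ENNReal.ofReal ((2:ℝ) ^ (k:ℤ)) * ∑' j : J (k:ℤ),
          (cube (ctr (k:ℤ) (j:ℕ)) (ρ (k:ℤ) (j:ℕ))).indicator (fun _ => (1:ℝ≥0∞)) x :=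
        ENNReal.tsum_mul_left
      _ ≤ ENNReal.ofReal ((2:ℝ) ^ (k:ℤ)) * ENNReal.ofReal C₀ :=
        mul_le_mul_right (hOv (k:ℤ) k.2 x) _
  -- geometric sum with s = 1
  have hconv : ∀ k : ℤ, (2:ℝ) ^ ((k:ℝ)) = (2:ℝ) ^ k := fun k => Real.rpow_intCast 2 k
  have hgeom1 : (∑' k : {k : ℤ // k ≤ k₀}, ENNReal.ofReal ((2:ℝ) ^ ((k:ℤ)))) ≤
      ENNReal.ofReal ((2:ℝ) ^ k₀ * 2) := by
    have h1 : ∀ k : {k : ℤ // k ≤ k₀}, ENNReal.ofReal ((2:ℝ) ^ ((k:ℤ))) =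
        ENNReal.ofReal ((2:ℝ) ^ ((((k:ℤ)):ℝ) * 1)) := by
      intro k; rw [mul_one, hconv]
    calc (∑' k : {k : ℤ // k ≤ k₀}, ENNReal.ofReal ((2:ℝ) ^ ((k:ℤ))))
        = ∑' k : {k : ℤ // k ≤ k₀}, ENNReal.ofReal ((2:ℝ) ^ ((((k:ℤ)):ℝ) * 1)) :=
          tsum_congr h1
      _ ≤ ENNReal.ofReal ((2:ℝ) ^ ((k₀:ℝ) * 1) * (1 - (2:ℝ) ^ (-(1:ℝ)))⁻¹) := my_geom k₀ one_pos
      _ = ENNReal.ofReal ((2:ℝ) ^ k₀ * 2) := by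
          congr 1
          rw [mul_one, hconv]
          congr 1
          rw [show (-(1:ℝ)) = ((-1 : ℤ) : ℝ) by norm_num, Real.rpow_intCast]
          norm_num
  -- a.e. bound on F
  have hF_le : ∀ᵐ x ∂(volume : Measure (Euc n)), F x ≤ ENNReal.ofReal (2 * C₀ * (2:ℝ) ^ k₀) := by
    filter_upwards [ae_all_iff.2 hGk_le] with x hx
    have h2k₀ : (0:ℝ) < (2:ℝ) ^ k₀ := zpow_pos (by norm_num) _
    calc F x ≤ ∑' k : {k : ℤ // k ≤ k₀}, ENNReal.ofReal ((2:ℝ) ^ (k:ℤ)) * ENNReal.ofReal C₀ :=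
        ENNReal.tsum_le_tsum hx
      _ = (∑' k : {k : ℤ // k ≤ k₀}, ENNReal.ofReal ((2:ℝ) ^ (k:ℤ))) * ENNReal.ofReal C₀ :=
        ENNReal.tsum_mul_right
      _ ≤ ENNReal.ofReal ((2:ℝ) ^ k₀ * 2) * ENNReal.ofReal C₀ :=
        mul_le_mul_left hgeom1 _
      _ = ENNReal.ofReal (2 * C₀ * (2:ℝ) ^ k₀) := by
        rw [← ENNReal.ofReal_mul (by positivity)]
        ring_nf
  -- shared facts about f₁
  have hf1meas : Measurable (fun x => ∑' (k : {k : ℤ // k ≤ k₀}) (j : J (k : ℤ)),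
      (2:ℝ) ^ (k : ℤ) * ((2 * ρ (k : ℤ) (j : ℕ)) ^ n) ^ (1/p) * a (k : ℤ) (j : ℕ) x) :=
    my_measurable_tsum fun k => my_measurable_tsum fun j => ht_meas k j
  have hf1_le : ∀ x, ENNReal.ofReal |∑' (k : {k : ℤ // k ≤ k₀}) (j : J (k : ℤ)),
      (2:ℝ) ^ (k : ℤ) * ((2 * ρ (k : ℤ) (j : ℕ)) ^ n) ^ (1/p) * a (k : ℤ) (j : ℕ) x| ≤ F x := by
    intro x
    refine (my_ofReal_abs_tsum_le _).trans ?_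
    exact ENNReal.tsum_le_tsum fun k => my_ofReal_abs_tsum_le _
  have h2k₀ : (0:ℝ) < (2:ℝ) ^ k₀ := zpow_pos (by norm_num) _
  have hbound : ∀ᵐ x ∂(volume : Measure (Euc n)),
      ‖∑' (k : {k : ℤ // k ≤ k₀}) (j : J (k : ℤ)),
        (2:ℝ) ^ (k : ℤ) * ((2 * ρ (k : ℤ) (j : ℕ)) ^ n) ^ (1/p) * a (k : ℤ) (j : ℕ) x‖ ≤
        2 * C₀ * (2:ℝ) ^ k₀ := by
    filter_upwards [hF_le] with x hx
    rw [Real.norm_eq_abs]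
    exact (ENNReal.ofReal_le_ofReal_iff (by positivity)).1 ((hf1_le x).trans hx)
  -- define f₁
  refine ⟨fun x => ∑' (k : {k : ℤ // k ≤ k₀}) (j : J (k : ℤ)),
      (2:ℝ) ^ (k : ℤ) * ((2 * ρ (k : ℤ) (j : ℕ)) ^ n) ^ (1/p) * a (k : ℤ) (j : ℕ) x,
    ?_, ?_, ?_, ?_⟩
  · -- goal 1 : a.e. finiteness and the defining identity
    filter_upwards [hF_le] with x hx
    refine ⟨?_, rfl⟩
    have hEq : (∑' (k : {k : ℤ // k ≤ k₀}) (j : J (k : ℤ)),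
        ENNReal.ofReal |(2:ℝ) ^ (k : ℤ) * ((2 * ρ (k : ℤ) (j : ℕ)) ^ n) ^ (1/p) *
          a (k : ℤ) (j : ℕ) x|) = F x := rfl
    rw [hEq]
    exact hx.trans_lt ENNReal.ofReal_lt_top
  · -- goal 2 : Memℒp ∞
    exact memLp_top_of_bound hf1meas.aestronglyMeasurable _ hbound
  · -- goal 3 : L^∞ bound
    rw [eLpNorm_exponent_top]
    refine (eLpNormEssSup_le_of_ae_bound hbound).trans (ENNReal.ofReal_le_ofReal ?_)
    exact mul_le_mul_of_nonneg_right (le_max_left _ _) h2k₀.le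
  · -- goal 4 : L^r bound
    have hcube_vol : ∀ (k : {k : ℤ // k ≤ k₀}) (j : J (k:ℤ)),
        volume (cube (ctr (k:ℤ) (j:ℕ)) (ρ (k:ℤ) (j:ℕ))) =
          ENNReal.ofReal ((2 * ρ (k:ℤ) (j:ℕ))^n) :=
      fun k j => my_cube_volume _ (hAtom' k j).1.le
    have hintG : ∀ k : {k : ℤ // k ≤ k₀}, (∫⁻ x, G k x) ≤ ENNReal.ofReal ((2:ℝ)^(k:ℤ)) *
        ∑' j : J (k:ℤ), ENNReal.ofReal ((2 * ρ (k:ℤ) (j:ℕ))^n) := by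
      intro k
      have hswap : (∫⁻ x, G k x) = ∑' j : J (k:ℤ), ∫⁻ x, ENNReal.ofReal |t k j x| :=
        lintegral_tsum fun j => (hoft_meas k j).aemeasurable
      rw [hswap]
      calc (∑' j : J (k:ℤ), ∫⁻ x, ENNReal.ofReal |t k j x|)
          ≤ ∑' j : J (k:ℤ), ENNReal.ofReal ((2:ℝ)^(k:ℤ)) *
              ENNReal.ofReal ((2 * ρ (k:ℤ) (j:ℕ))^n) := by
            refine ENNReal.tsum_le_tsum fun j => ?_
            calc (∫⁻ x, ENNReal.ofReal |t k j x|)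
                ≤ ∫⁻ x, ENNReal.ofReal ((2:ℝ)^(k:ℤ)) *
                    (cube (ctr (k:ℤ) (j:ℕ)) (ρ (k:ℤ) (j:ℕ))).indicator
                      (fun _ => (1:ℝ≥0∞)) x := lintegral_mono_ae (hper k j)
              _ = ENNReal.ofReal ((2:ℝ)^(k:ℤ)) * ∫⁻ x,
                    (cube (ctr (k:ℤ) (j:ℕ)) (ρ (k:ℤ) (j:ℕ))).indicator
                      (fun _ => (1:ℝ≥0∞)) x :=
                  lintegral_const_mul' _ _ ENNReal.ofReal_ne_top
              _ = ENNReal.ofReal ((2:ℝ)^(k:ℤ)) * ENNReal.ofReal ((2 * ρ (k:ℤ) (j:ℕ))^n) := by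
                  rw [lintegral_indicator_const (my_cube_measurable _ _), one_mul, hcube_vol k j]
        _ = ENNReal.ofReal ((2:ℝ)^(k:ℤ)) * ∑' j : J (k:ℤ),
              ENNReal.ofReal ((2 * ρ (k:ℤ) (j:ℕ))^n) := ENNReal.tsum_mul_left
    have h2pow : ∀ e1 e2 : ℝ, (2:ℝ)^e1 * (2:ℝ)^e2 = (2:ℝ)^(e1+e2) :=
      fun e1 e2 => (Real.rpow_add (by norm_num) _ _).symm
    have hGr : ∀ k : {k : ℤ // k ≤ k₀}, (∫⁻ x, (G k x) ^ r) ≤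
        ENNReal.ofReal (C₀^(r-1) * (2:ℝ)^((((k:ℤ)):ℝ)*(r-p))) * Ssup := by
      intro k
      have hκ : (0:ℝ) < (2:ℝ) ^ ((((k:ℤ)):ℝ)) := Real.rpow_pos_of_pos (by norm_num) _
      have hBk_ne : (ENNReal.ofReal ((2:ℝ)^(k:ℤ)) * ENNReal.ofReal C₀) ≠ ∞ :=
        ENNReal.mul_ne_top ENNReal.ofReal_ne_top ENNReal.ofReal_ne_top
      have h1 : (∫⁻ x, (G k x)^r) ≤
          (ENNReal.ofReal ((2:ℝ)^(k:ℤ)) * ENNReal.ofReal C₀)^(r-1) * ∫⁻ x, G k x := by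
        calc (∫⁻ x, (G k x)^r)
            ≤ ∫⁻ x, (ENNReal.ofReal ((2:ℝ)^(k:ℤ)) * ENNReal.ofReal C₀)^(r-1) * G k x :=
              lintegral_mono_ae ((hGk_le k).mono fun x hx => my_rpow_le_of_le hr1.le hx)
          _ = _ := lintegral_const_mul' _ _
              (ENNReal.rpow_ne_top_of_nonneg (by linarith) hBk_ne)
      have hTk : (∑' j : J (k:ℤ), ENNReal.ofReal ((2 * ρ (k:ℤ) (j:ℕ))^n)) ≤
          ENNReal.ofReal ((2:ℝ)^(-(((k:ℤ)):ℝ)*p)) * Ssup := by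
        have hle : ENNReal.ofReal ((2:ℝ)^((((k:ℤ)):ℝ)*p)) *
            (∑' j : J (k:ℤ), ENNReal.ofReal ((2 * ρ (k:ℤ) (j:ℕ))^n)) ≤ Ssup :=
          le_iSup (fun k : {k : ℤ // k ≤ k₀} => ENNReal.ofReal ((2:ℝ)^((((k:ℤ)):ℝ)*p)) *
            ∑' j : J (k:ℤ), ENNReal.ofReal ((2 * ρ (k:ℤ) (j:ℕ))^n)) k
        calc (∑' j : J (k:ℤ), ENNReal.ofReal ((2 * ρ (k:ℤ) (j:ℕ))^n))
            = ENNReal.ofReal ((2:ℝ)^(-(((k:ℤ)):ℝ)*p)) *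
                (ENNReal.ofReal ((2:ℝ)^((((k:ℤ)):ℝ)*p)) *
                  ∑' j : J (k:ℤ), ENNReal.ofReal ((2 * ρ (k:ℤ) (j:ℕ))^n)) := by
              rw [← mul_assoc, ← ENNReal.ofReal_mul (Real.rpow_nonneg (by norm_num) _),
                h2pow]
              norm_num
          _ ≤ _ := mul_le_mul_right hle _
      have hBk_eq : (ENNReal.ofReal ((2:ℝ)^(k:ℤ)) * ENNReal.ofReal C₀)^(r-1) =
          ENNReal.ofReal (((2:ℝ)^((((k:ℤ)):ℝ)) * C₀)^(r-1)) := by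
        rw [← ENNReal.ofReal_mul (zpow_pos (by norm_num : (0:ℝ) < 2) _).le, ← hconv (k:ℤ),
          ENNReal.ofReal_rpow_of_pos (by positivity)]
      have hcoef : ((2:ℝ)^((((k:ℤ)):ℝ)) * C₀)^(r-1) *
          ((2:ℝ)^((((k:ℤ)):ℝ)) * (2:ℝ)^(-(((k:ℤ)):ℝ)*p)) =
          C₀^(r-1) * (2:ℝ)^((((k:ℤ)):ℝ)*(r-p)) := by
        rw [Real.mul_rpow (Real.rpow_nonneg (by norm_num) _) hC₀.le,
          ← Real.rpow_mul (by norm_num : (0:ℝ) ≤ 2), h2pow, mul_comm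
            ((2:ℝ)^((((k:ℤ)):ℝ) * (r-1))) (C₀^(r-1)), mul_assoc,
          h2pow]
        congr 2
        ring
      calc (∫⁻ x, (G k x)^r)
          ≤ (ENNReal.ofReal ((2:ℝ)^(k:ℤ)) * ENNReal.ofReal C₀)^(r-1) * ∫⁻ x, G k x := h1
        _ ≤ (ENNReal.ofReal ((2:ℝ)^(k:ℤ)) * ENNReal.ofReal C₀)^(r-1) *
              (ENNReal.ofReal ((2:ℝ)^(k:ℤ)) * (ENNReal.ofReal ((2:ℝ)^(-(((k:ℤ)):ℝ)*p)) * Ssup)) :=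
            mul_le_mul_right ((hintG k).trans (mul_le_mul_right hTk _)) _
        _ = ENNReal.ofReal (C₀^(r-1) * (2:ℝ)^((((k:ℤ)):ℝ)*(r-p))) * Ssup := by
            rw [hBk_eq, ← hconv (k:ℤ),
              show ∀ X Y Z W : ℝ≥0∞, X * (Y * (Z * W)) = X * Y * Z * W from
                fun _ _ _ _ => by ring,
              ← ENNReal.ofReal_mul (by positivity), ← ENNReal.ofReal_mul (by positivity),
              mul_assoc (((2:ℝ)^((((k:ℤ)):ℝ)) * C₀)^(r-1)), hcoef]
    have hGr_root : ∀ k : {k : ℤ // k ≤ k₀}, (∫⁻ x, (G k x)^r)^(1/r) ≤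
        ENNReal.ofReal (C₀^((r-1)/r) * (2:ℝ)^((((k:ℤ)):ℝ)*s)) * Ssup^(1/r) := by
      intro k
      refine (ENNReal.rpow_le_rpow (hGr k) (by positivity)).trans_eq ?_
      rw [ENNReal.mul_rpow_of_nonneg _ _ (by positivity),
        ENNReal.ofReal_rpow_of_pos (by positivity)]
      congr 2
      rw [Real.mul_rpow (Real.rpow_nonneg hC₀.le _) (Real.rpow_nonneg (by norm_num) _),
        ← Real.rpow_mul hC₀.le, ← Real.rpow_mul (by norm_num : (0:ℝ) ≤ 2)]
      congr 2
      · rw [mul_one_div]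
      · rw [hs_def]; ring
    have hsum : (∑' k : {k : ℤ // k ≤ k₀}, (∫⁻ x, (G k x)^r)^(1/r)) ≤
        ENNReal.ofReal (D * (2:ℝ)^((k₀:ℝ)*s)) * Ssup^(1/r) := by
      calc (∑' k : {k : ℤ // k ≤ k₀}, (∫⁻ x, (G k x)^r)^(1/r))
          ≤ ∑' k : {k : ℤ // k ≤ k₀},
              ENNReal.ofReal (C₀^((r-1)/r) * (2:ℝ)^((((k:ℤ)):ℝ)*s)) * Ssup^(1/r) :=
            ENNReal.tsum_le_tsum hGr_root
        _ = (∑' k : {k : ℤ // k ≤ k₀}, ENNReal.ofReal (C₀^((r-1)/r)) *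
              ENNReal.ofReal ((2:ℝ)^((((k:ℤ)):ℝ)*s))) * Ssup^(1/r) := by
            rw [ENNReal.tsum_mul_right]
            congr 1
            exact tsum_congr fun k => by
              rw [ENNReal.ofReal_mul (Real.rpow_nonneg hC₀.le _)]
        _ = ENNReal.ofReal (C₀^((r-1)/r)) *
              (∑' k : {k : ℤ // k ≤ k₀}, ENNReal.ofReal ((2:ℝ)^((((k:ℤ)):ℝ)*s))) * Ssup^(1/r) := by
            rw [ENNReal.tsum_mul_left]
        _ ≤ ENNReal.ofReal (C₀^((r-1)/r)) *
              ENNReal.ofReal ((2:ℝ)^((k₀:ℝ)*s) * (1 - (2:ℝ)^(-s))⁻¹) * Ssup^(1/r) :=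
            mul_le_mul_left (mul_le_mul_right (my_geom k₀ hs) _) _
        _ = ENNReal.ofReal (D * (2:ℝ)^((k₀:ℝ)*s)) * Ssup^(1/r) := by
            rw [← ENNReal.ofReal_mul (Real.rpow_nonneg hC₀.le _)]
            congr 1
            rw [hD_def]
            ring
    have hMink : (∫⁻ x, F x ^ r)^(1/r) ≤
        ∑' k : {k : ℤ // k ≤ k₀}, (∫⁻ x, (G k x)^r)^(1/r) := by
      have h1 : ∀ x, F x = ∑' m : ℕ, G (eqv k₀ m) x := fun x => ((eqv k₀).tsum_eq _).symm
      have h2 : (∑' k : {k : ℤ // k ≤ k₀}, (∫⁻ x, (G k x)^r)^(1/r)) =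
          ∑' m : ℕ, (∫⁻ x, (G (eqv k₀ m) x)^r)^(1/r) :=
        ((eqv k₀).tsum_eq fun k => (∫⁻ x, (G k x)^r)^(1/r)).symm
      rw [h2]
      have h3 : (∫⁻ x, F x ^ r) = ∫⁻ x, (∑' m : ℕ, G (eqv k₀ m) x) ^ r :=
        lintegral_congr fun x => by rw [h1]
      rw [h3]
      exact my_minkowski volume hr1.le _ (fun m => hG_meas _)
    have hq_ne0 : (ENNReal.ofReal r) ≠ 0 := by
      simp only [ne_eq, ENNReal.ofReal_eq_zero, not_le]
      linarith
    have help : eLpNorm (fun x => ∑' (k : {k : ℤ // k ≤ k₀}) (j : J (k : ℤ)),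
        (2:ℝ) ^ (k : ℤ) * ((2 * ρ (k : ℤ) (j : ℕ)) ^ n) ^ (1/p) * a (k : ℤ) (j : ℕ) x)
        (ENNReal.ofReal r) volume =
        (∫⁻ x, (ENNReal.ofReal |∑' (k : {k : ℤ // k ≤ k₀}) (j : J (k : ℤ)),
          (2:ℝ) ^ (k : ℤ) * ((2 * ρ (k : ℤ) (j : ℕ)) ^ n) ^ (1/p) * a (k : ℤ) (j : ℕ) x|) ^ r
          ∂(volume : Measure (Euc n))) ^ (1/r) := by
      rw [eLpNorm_eq_lintegral_rpow_enorm_toReal hq_ne0 ENNReal.ofReal_ne_top,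
        ENNReal.toReal_ofReal hr0.le]
      congr 1
      refine lintegral_congr fun x => ?_
      rw [← ofReal_norm, Real.norm_eq_abs]
    rw [help]
    calc ((∫⁻ x, (ENNReal.ofReal |∑' (k : {k : ℤ // k ≤ k₀}) (j : J (k : ℤ)),
            (2:ℝ) ^ (k : ℤ) * ((2 * ρ (k : ℤ) (j : ℕ)) ^ n) ^ (1/p) * a (k : ℤ) (j : ℕ) x|) ^ r
            ∂(volume : Measure (Euc n))) ^ (1/r)) ^ r
        ≤ (ENNReal.ofReal (D * (2:ℝ)^((k₀:ℝ)*s)) * Ssup^(1/r)) ^ r := by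
          refine ENNReal.rpow_le_rpow ?_ hr0.le
          refine le_trans ?_ (hMink.trans hsum)
          refine ENNReal.rpow_le_rpow ?_ (by positivity)
          exact lintegral_mono fun x => ENNReal.rpow_le_rpow (hf1_le x) hr0.le
      _ = (ENNReal.ofReal (D * (2:ℝ)^((k₀:ℝ)*s))) ^ r * Ssup := by
          rw [ENNReal.mul_rpow_of_nonneg _ _ hr0.le, ← ENNReal.rpow_mul,
            one_div_mul_cancel hr0.ne', ENNReal.rpow_one]
      _ ≤ ENNReal.ofReal (max (2*C₀) (D^r) * (2:ℝ)^((k₀:ℝ)*(r-p))) * Ssup := by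
          refine mul_le_mul_left ?_ _
          rw [ENNReal.ofReal_rpow_of_pos (by positivity)]
          refine ENNReal.ofReal_le_ofReal ?_
          have hDr : (D * (2:ℝ)^((k₀:ℝ)*s))^r = D^r * (2:ℝ)^((k₀:ℝ)*(r-p)) := by
            rw [Real.mul_rpow hD.le (Real.rpow_nonneg (by norm_num) _),
              ← Real.rpow_mul (by norm_num : (0:ℝ) ≤ 2)]
            congr 2
            rw [hs_def]
            field_simp
          rw [hDr]
          exact mul_le_mul_of_nonneg_right (le_max_right _ _)
            (Real.rpow_nonneg (by norm_num) _)



end
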